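/- Let V be a commutative ring and m ⊆ V an ideal satisfying m·m = m. Assume that m is the union of a family of principal ideals of V that is directed under inclusion (i.e. m is a filtered colimit of principal ideals). Then the V-module m ⊗_V m is flat. -/

import Mathlib

open TensorProduct

private lemma smul_gen_tmul_gen_eq_zero {V : Type*} [CommRing V] {z s : V}
    (h : s • ((⟨z, Ideal.mem_span_singleton_self z⟩ : Ideal.span {z}) ⊗ₜ[V]
      (⟨z, Ideal.mem_span_singleton_self z⟩ : Ideal.span {z})) = 0) : s * z = 0 := by
  set fz : V →ₗ[V] V := LinearMap.toSpanSingleton V V z with hfz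
  have hrange : (Ideal.span {z} : Submodule V V) = LinearMap.range fz :=
    LinearMap.span_singleton_eq_range V V z
  set K : Ideal V := LinearMap.ker fz with hK
  let δ : (Ideal.span {z} : Ideal V) →ₗ[V] V ⧸ K :=
    (fz.quotKerEquivRange.symm : (LinearMap.range fz) →ₗ[V] V ⧸ K)
      ∘ₗ (LinearEquiv.ofEq _ _ hrange).toLinearMap
  have key : δ ⟨z, Ideal.mem_span_singleton_self z⟩ = Submodule.Quotient.mk (1 : V) := by
    show fz.quotKerEquivRange.symm ((LinearEquiv.ofEq _ _ hrange) ⟨z, _⟩)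
        = Submodule.Quotient.mk (1 : V)
    rw [LinearEquiv.symm_apply_eq]
    apply Subtype.ext
    rw [LinearMap.quotKerEquivRange_apply_mk]
    simp [hfz]
  let μ : (V ⧸ K) ⊗[V] (V ⧸ K) →ₗ[V] V ⧸ K := LinearMap.mul' V (V ⧸ K)
  let φ := μ ∘ₗ TensorProduct.map δ δ
  have h2 : Submodule.Quotient.mk (s : V) = (0 : V ⧸ K) := by
    have := congrArg φ h
    rw [map_zero, map_smul] at this
    rw [← this]
    show Submodule.Quotient.mk s = s • μ (TensorProduct.map δ δ
      ((⟨z, Ideal.mem_span_singleton_self z⟩ : Ideal.span {z}) ⊗ₜ[V]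
      (⟨z, Ideal.mem_span_singleton_self z⟩ : Ideal.span {z})))
    rw [TensorProduct.map_tmul, key, LinearMap.mul'_apply]
    have : (Submodule.Quotient.mk (1:V) : V ⧸ K) * Submodule.Quotient.mk (1:V)
        = Submodule.Quotient.mk (1:V) := mul_one _
    rw [this, ← Submodule.Quotient.mk_smul, smul_eq_mul, mul_one]
  have h3 : s ∈ K := (Submodule.Quotient.mk_eq_zero K).mp h2
  simpa [hK, LinearMap.mem_ker, hfz, LinearMap.toSpanSingleton_apply, smul_eq_mul] using h3


set_option maxHeartbeats 1000000
set_option synthInstance.maxHeartbeats 400000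

/-- Let `V` be a commutative ring and `m ⊆ V` an ideal with `m·m = m`.
If `m` is the union of a directed family of principal ideals (i.e. a filtered colimit of
principal ideals), then the `V`-module `m ⊗_V m` is flat. -/
theorem flat_tensor_of_directed_union_principal
    {V : Type*} [CommRing V] (m : Ideal V) (hm : m * m = m)
    {ι : Type*} [Nonempty ι] (g : ι → V)
    (hdir : Directed (· ≤ ·) fun i => Ideal.span {g i})
    (hsup : m = ⨆ i, Ideal.span {g i}) :
    Module.Flat V (TensorProduct V m m) := by
  classical
  letI : Preorder ι := Preorder.lift fun i => Ideal.span {g i}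
  haveI : IsDirected ι (· ≤ ·) := ⟨hdir⟩
  set G : ι → Type _ := fun i => ↥(Ideal.span {g i}) with hG
  let F : ∀ i j, i ≤ j → G i →ₗ[V] G j := fun i j h => Submodule.inclusion h
  haveI : DirectedSystem G (fun i j h => F i j h) :=
    ⟨fun _ _ => rfl, fun _ _ _ _ _ _ => rfl⟩
  have hle : ∀ i, Ideal.span {g i} ≤ m := fun i => by
    rw [hsup]; exact le_iSup (fun i => Ideal.span {g i}) i
  have hmem : ∀ i, g i ∈ m := fun i => hle i (Ideal.mem_span_singleton_self _)
  have hmemx : ∀ x ∈ m, ∃ i, x ∈ Ideal.span {g i} := by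
    intro x hx
    rw [hsup] at hx
    exact (Submodule.mem_iSup_of_directed _ hdir).mp hx
  -- the direct limit of the principal ideals is `m`
  let ε : Module.DirectLimit G F →ₗ[V] ↥m :=
    Module.DirectLimit.lift V ι G F (fun i => Submodule.inclusion (hle i))
      (fun i j hij x => rfl)
  have hεof : ∀ (i) (x : G i),
      ε (Module.DirectLimit.of V ι G F i x) = ⟨x.1, hle i x.2⟩ := fun i x => by
    exact (Module.DirectLimit.lift_of (G := G) (f := F) (fun i => Submodule.inclusion (hle i))
      (fun i j hij x => rfl) x).trans rfl
  have hεinj : Function.Injective ε := by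
    rw [injective_iff_map_eq_zero]
    intro z hz
    obtain ⟨i, x, rfl⟩ := Module.DirectLimit.exists_of z
    rw [hεof] at hz
    have hval : (x : V) = 0 := congrArg Subtype.val hz
    have hx0 : x = 0 := Subtype.ext hval
    rw [hx0, map_zero]
  have hεsurj : Function.Surjective ε := fun xm => by
    obtain ⟨i, hx⟩ := hmemx xm.1 xm.2
    exact ⟨Module.DirectLimit.of V ι G F i ⟨xm.1, hx⟩, by rw [hεof]⟩
  let e : Module.DirectLimit G F ≃ₗ[V] ↥m := LinearEquiv.ofBijective ε ⟨hεinj, hεsurj⟩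
  have hsymm : ∀ (i) (x : G i) (h' : x.1 ∈ m),
      e.symm ⟨x.1, h'⟩ = Module.DirectLimit.of V ι G F i x := fun i x h' => by
    rw [LinearEquiv.symm_apply_eq]
    show (⟨x.1, h'⟩ : ↥m) = ε (Module.DirectLimit.of V ι G F i x)
    rw [hεof]
  -- directed systems for the tensored families
  haveI : DirectedSystem (fun i => G i ⊗[V] ↥m)
      (fun i j h => LinearMap.rTensor ↥m (F i j h)) := by
    constructor
    · intro i x
      refine x.induction_on rfl (fun a b => rfl) (fun u v hu hv => ?_)
      rw [map_add, hu, hv]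
    · intro k j i hij hjk x
      refine x.induction_on rfl (fun a b => rfl) (fun u v hu hv => ?_)
      rw [map_add, map_add, map_add, hu, hv]
  -- detection lemma
  have hdet : ∀ (k : ι) (x y : V) (hx : x ∈ Ideal.span {g k}) (hy : y ∈ Ideal.span {g k}),
      ((⟨x, hle k hx⟩ : ↥m) ⊗ₜ[V] (⟨y, hle k hy⟩ : ↥m)) = 0 →
      ∃ (r : ι) (hkr : Ideal.span {g k} ≤ Ideal.span {g r}),
        ((⟨x, hkr hx⟩ : G r) ⊗ₜ[V] (⟨y, hkr hy⟩ : G r)) = 0 := by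
    intro k x y hx hy h0
    have h1 : ((Module.DirectLimit.of V ι G F k ⟨x, hx⟩) ⊗ₜ[V] (⟨y, hle k hy⟩ : ↥m) :
        Module.DirectLimit G F ⊗[V] ↥m) = 0 := by
      have heq : ((Module.DirectLimit.of V ι G F k ⟨x, hx⟩) ⊗ₜ[V] (⟨y, hle k hy⟩ : ↥m))
          = TensorProduct.map (e.symm : ↥m →ₗ[V] Module.DirectLimit G F) LinearMap.id
            ((⟨x, hle k hx⟩ : ↥m) ⊗ₜ[V] (⟨y, hle k hy⟩ : ↥m)) := by
        rw [TensorProduct.map_tmul]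
        rw [show ((e.symm : ↥m →ₗ[V] Module.DirectLimit G F) (⟨x, hle k hx⟩ : ↥m))
          = Module.DirectLimit.of V ι G F k ⟨x, hx⟩ from hsymm k ⟨x, hx⟩ (hle k hx)]
        rfl
      rw [heq, h0, map_zero]
    have h2 := congrArg (TensorProduct.directLimitLeft F ↥m) h1
    rw [TensorProduct.directLimitLeft_tmul_of, map_zero] at h2
    obtain ⟨l, hkl, h3⟩ := Module.DirectLimit.of.zero_exact h2
    have hkl' : Ideal.span {g k} ≤ Ideal.span {g l} := hkl
    rw [LinearMap.rTensor_tmul] at h3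
    -- h3 : (⟨x, _⟩ : G l) ⊗ₜ (⟨y, _⟩ : ↥m) = 0
    haveI : DirectedSystem (fun i => G l ⊗[V] G i)
        (fun i j h => LinearMap.lTensor (G l) (F i j h)) := by
      constructor
      · intro i x
        refine x.induction_on rfl (fun a b => rfl) (fun u v hu hv => ?_)
        rw [map_add, hu, hv]
      · intro a b c hab hbc x
        refine x.induction_on rfl (fun a b => rfl) (fun u v hu hv => ?_)
        rw [map_add, map_add, map_add, hu, hv]
    have h4 : (((⟨x, hkl' hx⟩ : G l) ⊗ₜ[V] (Module.DirectLimit.of V ι G F k ⟨y, hy⟩)) :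
        G l ⊗[V] Module.DirectLimit G F) = 0 := by
      have heq : ((⟨x, hkl' hx⟩ : G l) ⊗ₜ[V] (Module.DirectLimit.of V ι G F k ⟨y, hy⟩))
          = TensorProduct.map LinearMap.id (e.symm : ↥m →ₗ[V] Module.DirectLimit G F)
            ((⟨x, hkl' hx⟩ : G l) ⊗ₜ[V] (⟨y, hle k hy⟩ : ↥m)) := by
        rw [TensorProduct.map_tmul]
        rw [show ((e.symm : ↥m →ₗ[V] Module.DirectLimit G F) (⟨y, hle k hy⟩ : ↥m))
          = Module.DirectLimit.of V ι G F k ⟨y, hy⟩ from hsymm k ⟨y, hy⟩ (hle k hy)]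
        rfl
      rw [heq]
      have h3' : ((⟨x, hkl' hx⟩ : G l) ⊗ₜ[V] (⟨y, hle k hy⟩ : ↥m)) = 0 := h3
      rw [h3', map_zero]
    have h5 := congrArg (TensorProduct.directLimitRight F (G l)) h4
    rw [TensorProduct.directLimitRight_tmul_of, map_zero] at h5
    obtain ⟨j, hkj, h6⟩ := Module.DirectLimit.of.zero_exact h5
    have hkj' : Ideal.span {g k} ≤ Ideal.span {g j} := hkj
    rw [LinearMap.lTensor_tmul] at h6
    obtain ⟨r, hlr, hjr⟩ := hdir l j
    have hlr' : l ≤ r := hlr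
    have hjr' : j ≤ r := hjr
    refine ⟨r, hkl'.trans hlr, ?_⟩
    have h7 := congrArg (TensorProduct.map (F l r hlr') (F j r hjr')) h6
    rw [TensorProduct.map_tmul, map_zero] at h7
    exact h7
  -- generators of the tensor square
  let γ : ι → (↥m ⊗[V] ↥m) := fun i => (⟨g i, hmem i⟩ : ↥m) ⊗ₜ[V] (⟨g i, hmem i⟩ : ↥m)
  have hmono : ∀ {i j : ι}, Ideal.span {g i} ≤ Ideal.span {g j} →
      ∃ d, d * g j = g i ∧ γ i = (d * d) • γ j := by
    intro i j hij
    obtain ⟨d, hd⟩ := Ideal.mem_span_singleton'.mp (hij (Ideal.mem_span_singleton_self (g i)))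
    refine ⟨d, hd, ?_⟩
    have hsub : (⟨g i, hmem i⟩ : ↥m) = d • (⟨g j, hmem j⟩ : ↥m) := by
      apply Subtype.ext
      show g i = d • g j
      rw [smul_eq_mul, hd]
    show (⟨g i, hmem i⟩ : ↥m) ⊗ₜ[V] (⟨g i, hmem i⟩ : ↥m)
        = (d * d) • ((⟨g j, hmem j⟩ : ↥m) ⊗ₜ[V] (⟨g j, hmem j⟩ : ↥m))
    simp only [hsub, smul_tmul', tmul_smul, smul_smul]
  have hrep : ∀ t : ↥m ⊗[V] ↥m, ∃ (k : ι) (c : V), t = c • γ k := by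
    intro t
    refine t.induction_on ?_ ?_ ?_
    · exact ⟨Classical.arbitrary ι, 0, (zero_smul V _).symm⟩
    · rintro ⟨x, hxm⟩ ⟨y, hym⟩
      obtain ⟨i, hxi⟩ := hmemx x hxm
      obtain ⟨j, hyj⟩ := hmemx y hym
      obtain ⟨kk, hik, hjk⟩ := hdir i j
      obtain ⟨a, ha⟩ := Ideal.mem_span_singleton'.mp (hik hxi)
      obtain ⟨b, hb⟩ := Ideal.mem_span_singleton'.mp (hjk hyj)
      refine ⟨kk, a * b, ?_⟩
      have hxe : (⟨x, hxm⟩ : ↥m) = a • (⟨g kk, hmem kk⟩ : ↥m) := by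
        apply Subtype.ext
        show x = a • g kk
        rw [smul_eq_mul, ha]
      have hye : (⟨y, hym⟩ : ↥m) = b • (⟨g kk, hmem kk⟩ : ↥m) := by
        apply Subtype.ext
        show y = b • g kk
        rw [smul_eq_mul, hb]
      show (⟨x, hxm⟩ : ↥m) ⊗ₜ[V] (⟨y, hym⟩ : ↥m)
          = (a * b) • ((⟨g kk, hmem kk⟩ : ↥m) ⊗ₜ[V] (⟨g kk, hmem kk⟩ : ↥m))
      simp only [hxe, hye, smul_tmul', tmul_smul, smul_smul]
      rw [mul_comm b a]
    · rintro t₁ t₂ ⟨k₁, c₁, rfl⟩ ⟨k₂, c₂, rfl⟩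
      obtain ⟨kk, h1, h2⟩ := hdir k₁ k₂
      obtain ⟨d₁, _, hγ₁⟩ := hmono h1
      obtain ⟨d₂, _, hγ₂⟩ := hmono h2
      exact ⟨kk, c₁ * (d₁ * d₁) + c₂ * (d₂ * d₂), by
        rw [hγ₁, hγ₂, smul_smul, smul_smul, add_smul]⟩
  -- every element of `m` is a multiple of a square of a generator
  have hsq : ∀ v ∈ m, ∃ (l : ι) (c2 : V), c2 * (g l * g l) = v := by
    intro v hv
    have hv2 : v ∈ m * m := by rw [hm]; exact hv
    rw [hsup, Submodule.iSup_mul] at hv2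
    simp_rw [Submodule.mul_iSup] at hv2
    have hdir1 : Directed (· ≤ ·) fun i => ⨆ j, Ideal.span {g i} * Ideal.span {g j} := by
      intro a b
      obtain ⟨cc, hac, hbc⟩ := hdir a b
      exact ⟨cc, iSup_mono fun j => mul_le_mul' hac le_rfl,
             iSup_mono fun j => mul_le_mul' hbc le_rfl⟩
    obtain ⟨i, hi⟩ := (Submodule.mem_iSup_of_directed _ hdir1).mp hv2
    have hdir2 : Directed (· ≤ ·) fun j => Ideal.span {g i} * Ideal.span {g j} := by
      intro a b
      obtain ⟨cc, hac, hbc⟩ := hdir a b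
      exact ⟨cc, mul_le_mul' le_rfl hac, mul_le_mul' le_rfl hbc⟩
    obtain ⟨j, hj⟩ := (Submodule.mem_iSup_of_directed _ hdir2).mp hi
    obtain ⟨l, hil, hjl⟩ := hdir i j
    have hvl : v ∈ Ideal.span {g l} * Ideal.span {g l} := mul_le_mul' hil hjl hj
    rw [Ideal.span_singleton_mul_span_singleton] at hvl
    obtain ⟨c2, hc2⟩ := Ideal.mem_span_singleton'.mp hvl
    exact ⟨l, c2, hc2⟩
  -- flatness via the equational criterion
  rw [Module.Flat.iff_forall_isTrivialRelation]
  intro ι' f x hfx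
  choose k c hc using fun i => hrep (x i)
  obtain ⟨k0, hk0⟩ := Finset.exists_le (Finset.univ.image k)
  have hk0' : ∀ i, Ideal.span {g (k i)} ≤ Ideal.span {g k0} :=
    fun i => hk0 _ (Finset.mem_image_of_mem k (Finset.mem_univ i))
  choose d hd hγd using fun i : Fin ι' => hmono (hk0' i)
  have hx' : ∀ i, x i = (c i * (d i * d i)) • γ k0 := fun i => by
    rw [hc i, hγd i, smul_smul]
  set s : V := ∑ i, f i * (c i * (d i * d i)) with hs_def
  have hs : s • γ k0 = 0 := by
    rw [hs_def, Finset.sum_smul, ← hfx]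
    exact Finset.sum_congr rfl fun i _ => by rw [hx' i, smul_smul]
  have hsx : s * g k0 ∈ Ideal.span {g k0} := Ideal.mem_span_singleton'.mpr ⟨s, rfl⟩
  have hst : ((⟨s * g k0, hle k0 hsx⟩ : ↥m) ⊗ₜ[V]
      (⟨g k0, hle k0 (Ideal.mem_span_singleton_self _)⟩ : ↥m)) = 0 := by
    rw [← hs]
    show _ = s • ((⟨g k0, hmem k0⟩ : ↥m) ⊗ₜ[V] (⟨g k0, hmem k0⟩ : ↥m))
    rw [smul_tmul']
    congr 1
  obtain ⟨r, hkr, hzero⟩ :=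
    hdet k0 (s * g k0) (g k0) hsx (Ideal.mem_span_singleton_self _) hst
  obtain ⟨d0, hd0, _⟩ := hmono hkr
  have hz1 : (⟨s * g k0, hkr hsx⟩ : G r)
      = (s * d0) • (⟨g r, Ideal.mem_span_singleton_self (g r)⟩ : G r) := by
    apply Subtype.ext
    show s * g k0 = (s * d0) • g r
    rw [smul_eq_mul, ← hd0]; ring
  have hz2 : (⟨g k0, hkr (Ideal.mem_span_singleton_self _)⟩ : G r)
      = d0 • (⟨g r, Ideal.mem_span_singleton_self (g r)⟩ : G r) := by
    apply Subtype.ext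
    show g k0 = d0 • g r
    rw [smul_eq_mul, hd0]
  simp only [hz1, hz2, smul_tmul', tmul_smul, smul_smul] at hzero
  rw [← smul_tmul', show d0 * (s * d0) = s * d0 * d0 by ring] at hzero
  have hann : (s * d0 * d0) * g r = 0 := smul_gen_tmul_gen_eq_zero hzero
  obtain ⟨l, c2, hc2⟩ := hsq (g r) (hmem r)
  set b : V := (d0 * c2 * g l) * (d0 * c2 * g l) with hb_def
  have hγb : γ k0 = b • γ l := by
    have hsub : (⟨g k0, hmem k0⟩ : ↥m) = (d0 * c2 * g l) • (⟨g l, hmem l⟩ : ↥m) := by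
      apply Subtype.ext
      show g k0 = (d0 * c2 * g l) • g l
      rw [smul_eq_mul, ← hd0, ← hc2]; ring
    show (⟨g k0, hmem k0⟩ : ↥m) ⊗ₜ[V] (⟨g k0, hmem k0⟩ : ↥m)
        = b • ((⟨g l, hmem l⟩ : ↥m) ⊗ₜ[V] (⟨g l, hmem l⟩ : ↥m))
    simp only [hsub, hb_def, smul_tmul', tmul_smul, smul_smul]
  have hsb : s * b = 0 := by
    rw [hb_def]
    calc s * ((d0 * c2 * g l) * (d0 * c2 * g l))
        = (c2 * (s * d0 * d0)) * (c2 * (g l * g l)) := by ring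
      _ = (c2 * (s * d0 * d0)) * g r := by rw [hc2]
      _ = c2 * ((s * d0 * d0) * g r) := by ring
      _ = 0 := by rw [hann, mul_zero]
  refine ⟨1, fun i _ => (c i * (d i * d i)) * b, fun _ => γ l,
    fun i => ?_, fun _ => ?_⟩
  · rw [Fintype.sum_unique, hx' i, hγb, smul_smul]
  · have hrw : ∀ i, f i * ((c i * (d i * d i)) * b) = (f i * (c i * (d i * d i))) * b :=
      fun i => by ring
    simp_rw [hrw]
    rw [← Finset.sum_mul, ← hs_def, hsb]
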